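/- Let p > 1, f, F > 0 with f^p ≤ F, and let G ≥ 0 satisfy F ≥ f^p/(β+1)^{p-1} + (p-1)β G/(β+1)^p for all β > 0. Then G ≤ F·ω_p(f^p/F)^p, where ω_p is the inverse of H_p(z) = -(p-1)z^p + pz^{p-1} on [1, p/(p-1)]. -/

import Mathlib

/-- Let `p > 1`, `0 < f^p ≤ F`, `G ≥ 0`, and suppose
`F ≥ f^p/(β+1)^(p-1) + (p-1)βG/(β+1)^p` for all `β > 0`. Then `G ≤ F·c^p`, where
`c = ω_p(f^p/F)` is characterized by `c ∈ [1, p/(p-1)]` and `H_p c = f^p/F`. -/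
theorem bound_by_Bellman (p f F G c : ℝ) (hp : 1 < p) (hf : 0 < f)
    (hfF : f ^ p ≤ F) (hG : 0 ≤ G) (hc : c ∈ Set.Icc 1 (p / (p - 1)))
    (hHc : -(p - 1) * c ^ p + p * c ^ (p - 1) = f ^ p / F)
    (h : ∀ β : ℝ, 0 < β →
      f ^ p / (β + 1) ^ (p - 1) + (p - 1) * β * G / (β + 1) ^ p ≤ F) :
    G ≤ F * c ^ p := by
  have hp1 : (0:ℝ) < p - 1 := by linarith
  have hfp : (0:ℝ) < f ^ p := Real.rpow_pos_of_pos hf p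
  have hF : (0:ℝ) < F := lt_of_lt_of_le hfp hfF
  obtain ⟨hc1, _⟩ := hc
  rcases eq_or_lt_of_le hc1 with hceq | hclt
  · -- c = 1, so f^p = F; take β → 0⁺
    have hc' : c = 1 := hceq.symm
    subst hc'
    rw [Real.one_rpow, Real.one_rpow] at hHc
    have hfpF : f ^ p = F := by
      have : f ^ p / F = 1 := by linarith
      field_simp at this; linarith
    rw [Real.one_rpow, mul_one]
    -- key inequality for each β > 0
    have key : ∀ β : ℝ, 0 < β → G * (p - 1) ≤ F * (((1 + β) ^ p - (1 + β)) / β) := by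
      intro β hβ
      have hβ1 : (0:ℝ) < β + 1 := by linarith
      have hb := h β hβ
      rw [hfpF] at hb
      have hpow : (β + 1) ^ p = (β + 1) ^ (p - 1) * (β + 1) := by
        rw [← Real.rpow_add_one (ne_of_gt hβ1)]; ring_nf
      have h1 : (0:ℝ) < (β + 1) ^ (p - 1) := Real.rpow_pos_of_pos hβ1 _
      have h2 : (0:ℝ) < (β + 1) ^ p := Real.rpow_pos_of_pos hβ1 _
      -- multiply through by (β+1)^p
      have hb2 : F * (β + 1) + (p - 1) * β * G ≤ F * (β + 1) ^ p := by
        have := mul_le_mul_of_nonneg_right hb (le_of_lt h2)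
        calc F * (β + 1) + (p - 1) * β * G
            = (F / (β + 1) ^ (p - 1) + (p - 1) * β * G / (β + 1) ^ p) * (β + 1) ^ p := by
              rw [hpow]; field_simp
          _ ≤ F * (β + 1) ^ p := this
      have hd : F * (((1 + β) ^ p - (1 + β)) / β) = F * ((1 + β) ^ p - (1 + β)) / β := by
        ring
      rw [hd, le_div_iff₀ hβ]
      have h3 : 1 + β = β + 1 := by ring
      rw [h3]
      nlinarith [hb2]
    -- the limit of ((1+β)^p - (1+β))/β as β → 0⁺ is p - 1
    have hderiv : HasDerivAt (fun x : ℝ => x ^ p - x) (p - 1) 1 := by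
      have h1 : HasDerivAt (fun x : ℝ => x ^ p) (p * 1 ^ (p - 1)) 1 :=
        Real.hasDerivAt_rpow_const (Or.inl one_ne_zero)
      have := h1.sub (hasDerivAt_id 1)
      rw [Real.one_rpow, mul_one] at this; exact this
    have hslope := hasDerivAt_iff_tendsto_slope.mp hderiv
    have hmap : Filter.Tendsto (fun β : ℝ => 1 + β) (nhdsWithin 0 (Set.Ioi 0))
        (nhdsWithin 1 {(1:ℝ)}ᶜ) := by
      apply tendsto_nhdsWithin_of_tendsto_nhds_of_eventually_within
      · have : Filter.Tendsto (fun β : ℝ => 1 + β) (nhds 0) (nhds (1 + 0)) :=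
          (continuous_const.add continuous_id).tendsto 0
        simpa using this.mono_left nhdsWithin_le_nhds
      · filter_upwards [self_mem_nhdsWithin] with β hβ
        simp only [Set.mem_compl_iff, Set.mem_singleton_iff]
        intro hcon
        have : β = 0 := by linarith
        exact absurd this (ne_of_gt hβ)
    have hlim : Filter.Tendsto (fun β : ℝ => ((1 + β) ^ p - (1 + β)) / β)
        (nhdsWithin 0 (Set.Ioi 0)) (nhds (p - 1)) := by
      have := hslope.comp hmap
      have heq : (fun β : ℝ => slope (fun x : ℝ => x ^ p - x) 1 (1 + β))
          = fun β : ℝ => ((1 + β) ^ p - (1 + β)) / β := by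
        funext β
        simp only [slope, Real.one_rpow, vsub_eq_sub, sub_self, sub_zero]
        rw [add_sub_cancel_left, div_eq_inv_mul, smul_eq_mul]
      rw [← heq]
      exact this
    have hlim2 : Filter.Tendsto (fun β : ℝ => F * (((1 + β) ^ p - (1 + β)) / β))
        (nhdsWithin 0 (Set.Ioi 0)) (nhds (F * (p - 1))) :=
      hlim.const_mul F
    have hle : G * (p - 1) ≤ F * (p - 1) := by
      refine ge_of_tendsto hlim2 ?_
      filter_upwards [self_mem_nhdsWithin] with β hβ
      exact key β hβ
    nlinarith [hle, hp1]
  · -- c > 1: take β = c - 1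
    have hcpos : (0:ℝ) < c := by linarith
    have hβ : (0:ℝ) < c - 1 := by linarith
    have hb := h (c - 1) hβ
    have h3 : c - 1 + 1 = c := by ring
    rw [h3] at hb
    have hpow : c ^ p = c ^ (p - 1) * c := by
      rw [← Real.rpow_add_one (ne_of_gt hcpos)]; ring_nf
    have h1 : (0:ℝ) < c ^ (p - 1) := Real.rpow_pos_of_pos hcpos _
    have h2 : (0:ℝ) < c ^ p := Real.rpow_pos_of_pos hcpos _
    -- f^p = F * (-(p-1)c^p + p c^(p-1))
    have hfpeq : f ^ p = F * (-(p - 1) * c ^ p + p * c ^ (p - 1)) := by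
      field_simp at hHc
      linarith [hHc]
    -- f^p / c^(p-1) = F * (-(p-1)c + p)
    have hdiv : f ^ p / c ^ (p - 1) = F * (-(p - 1) * c + p) := by
      rw [hfpeq, hpow]; field_simp
    rw [hdiv] at hb
    -- so (p-1)(c-1)G/c^p ≤ F(p-1)(c-1)
    have hkey : (p - 1) * (c - 1) * G / c ^ p ≤ F * (p - 1) * (c - 1) := by
      nlinarith [hb]
    rw [div_le_iff₀ h2] at hkey
    have hfac : (0:ℝ) < (p - 1) * (c - 1) := mul_pos hp1 hβ
    nlinarith [hkey, hfac, h2, hF]
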